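/- The quantity V_0^{EU} — the infimum of E^Q[M_0] over all Q-supermartingales (M_k)_{k=0}^n satisfying E^P[ l(M_k − S_k) ] ≤ α_k for k = 1,…,n — equals the infimum of E^Q[M_0] over all Q-supermartingales (M_t)_{t=0}^n for which there exists, for each k ∈ {1,…,n}, a P-supermartingale (N^k_t)_{t=0}^k satisfying N^k_0 = α_k a.s. and N^k_k ≥ l(M_k − S_k) a.s. -/

import Mathlib

open MeasureTheory Filter
open scoped MeasureTheory

/-- A supermartingale (under measure `μ`) on the discrete time interval `{a,…,b}`. -/
def IsSupermartingaleOn {Ω : Type*} {m0 : MeasurableSpace Ω}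
    (𝓕 : MeasureTheory.Filtration ℕ m0) (μ : Measure Ω)
    (M : ℕ → Ω → ℝ) (a b : ℕ) : Prop :=
  (∀ k, a ≤ k → k ≤ b → StronglyMeasurable[𝓕 k] (M k)) ∧
  (∀ k, a ≤ k → k ≤ b → Integrable (M k) μ) ∧
  (∀ k, a ≤ k → k < b → (μ[M (k + 1)|𝓕 k]) ≤ᵐ[μ] M k)

/-- A function measurable w.r.t. a `P`-trivial σ-algebra is a.e. equal to its integral. -/
lemma ae_eq_integral_of_trivial {Ω : Type*} {m0 m : MeasurableSpace Ω}
    (hm : m ≤ m0) (P : @Measure Ω m0) [IsProbabilityMeasure P]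
    (htriv : ∀ s : Set Ω, MeasurableSet[m] s → P s = 0 ∨ P s = 1)
    {Y : Ω → ℝ} (hY : StronglyMeasurable[m] Y) (hYint : Integrable Y P) :
    Y =ᵐ[P] fun _ => ∫ ω, Y ω ∂P := by
  set c := ∫ ω, Y ω ∂P with hc
  have key : ∀ ε : ℝ, 0 < ε → ∀ᵐ ω ∂P, |Y ω - c| < ε := by
    intro ε hε
    have hA : P {ω | c + ε ≤ Y ω} = 0 := by
      have hAm : MeasurableSet[m] {ω | c + ε ≤ Y ω} := hY.measurable measurableSet_Ici
      rcases htriv _ hAm with h | h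
      · exact h
      · exfalso
        have hae : ∀ᵐ ω ∂P, c + ε ≤ Y ω := by
          rw [ae_iff]
          have hcompl : P {ω | c + ε ≤ Y ω}ᶜ = 0 :=
            (prob_compl_eq_zero_iff (μ := P) (hm _ hAm)).mpr h
          have hset : {a | ¬ c + ε ≤ Y a} = {ω | c + ε ≤ Y ω}ᶜ := by
            ext a; simp [not_le]
          rw [hset]
          exact hcompl
        have hmono := integral_mono_ae (integrable_const (c + ε)) hYint hae
        simp only [integral_const, probReal_univ, one_smul] at hmono
        linarith
    have hB : P {ω | Y ω ≤ c - ε} = 0 := by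
      have hBm : MeasurableSet[m] {ω | Y ω ≤ c - ε} := hY.measurable measurableSet_Iic
      rcases htriv _ hBm with h | h
      · exact h
      · exfalso
        have hae : ∀ᵐ ω ∂P, Y ω ≤ c - ε := by
          rw [ae_iff]
          have hcompl : P {ω | Y ω ≤ c - ε}ᶜ = 0 :=
            (prob_compl_eq_zero_iff (μ := P) (hm _ hBm)).mpr h
          have hset : {a | ¬ Y a ≤ c - ε} = {ω | Y ω ≤ c - ε}ᶜ := by
            ext a; simp [not_le]
          rw [hset]
          exact hcompl
        have hmono := integral_mono_ae hYint (integrable_const (c - ε)) hae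
        simp only [integral_const, probReal_univ, one_smul] at hmono
        linarith
    rw [ae_iff]
    refine measure_mono_null (fun ω hω => ?_) (measure_union_null hA hB)
    simp only [Set.mem_setOf_eq, not_lt] at hω
    rcases le_abs.mp hω with h | h
    · left; simp only [Set.mem_setOf_eq]; linarith
    · right; simp only [Set.mem_setOf_eq]; linarith
  have h2 : ∀ᵐ ω ∂P, ∀ n : ℕ, |Y ω - c| < 1 / (n + 1) :=
    ae_all_iff.2 fun n => key _ (by positivity)
  filter_upwards [h2] with ω hω
  by_contra hne
  obtain ⟨n, hn⟩ := exists_nat_one_div_lt (abs_pos.2 (sub_ne_zero.2 hne))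
  have := hω n
  push_cast at hn this
  linarith

/-- Proposition 3.1: `V₀^EU`, the infimum of `E^Q[M₀]` over `Q`-supermartingales
satisfying `E^P[l(M_k - S_k)] ≤ α_k` for `k = 1,…,n`, coincides with the infimum
of `E^Q[M₀]` over `Q`-supermartingales for which there exist, for every `k`,
`P`-supermartingales `(N^k_t)_{t=0}^k` with `N^k_0 = α_k` and
`N^k_k ≥ l(M_k - S_k)` a.s. -/
theorem stmt_5
    {Ω : Type*} {m0 : MeasurableSpace Ω} (P Q : Measure Ω)
    [IsProbabilityMeasure P] [IsProbabilityMeasure Q]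
    (hPQ : P ≪ Q) (hQP : Q ≪ P)
    (𝓕 : Filtration ℕ m0) (n : ℕ)
    (htriv : ∀ s : Set Ω, MeasurableSet[𝓕 0] s → P s = 0 ∨ P s = 1)
    (l : ℝ → ℝ) (hconv : ConvexOn ℝ Set.univ l) (hdec : Antitone l)
    (hbdd : ∃ c : ℝ, ∀ x : ℝ, c ≤ l x)
    (S : ℕ → Ω → ℝ) (hS : Adapted 𝓕 S) (hSint : ∀ k, Integrable (S k) Q)
    (α : ℕ → ℝ) :
    sInf {x : ℝ | ∃ M : ℕ → Ω → ℝ, IsSupermartingaleOn 𝓕 Q M 0 n ∧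
        (∀ k, 1 ≤ k → k ≤ n → Integrable (fun ω => l (M k ω - S k ω)) P) ∧
        (∀ k, 1 ≤ k → k ≤ n → ∫ ω, l (M k ω - S k ω) ∂P ≤ α k) ∧
        x = ∫ ω, M 0 ω ∂Q}
    =
    sInf {x : ℝ | ∃ M : ℕ → Ω → ℝ, IsSupermartingaleOn 𝓕 Q M 0 n ∧
        (∀ k, 1 ≤ k → k ≤ n → Integrable (fun ω => l (M k ω - S k ω)) P) ∧
        (∀ k, 1 ≤ k → k ≤ n → ∃ N : ℕ → Ω → ℝ,
          IsSupermartingaleOn 𝓕 P N 0 k ∧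
          (N 0 =ᵐ[P] fun _ => α k) ∧
          ((fun ω => l (M k ω - S k ω)) ≤ᵐ[P] N k)) ∧
        x = ∫ ω, M 0 ω ∂Q} := by
  congr 1
  ext x
  simp only [Set.mem_setOf_eq]
  constructor
  · rintro ⟨M, hM, hint, hle, hx⟩
    refine ⟨M, hM, hint, ?_, hx⟩
    intro k hk1 hkn
    set X : Ω → ℝ := fun ω => l (M k ω - S k ω) with hX
    have hXint : Integrable X P := hint k hk1 hkn
    have hXm : StronglyMeasurable[𝓕 k] X := by
      have h1 : Measurable[𝓕 k] fun ω => M k ω - S k ω :=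
        ((hM.1 k (Nat.zero_le _) hkn).measurable.sub (hS k))
      exact (hdec.measurable.comp h1).stronglyMeasurable
    set c : ℝ := α k - ∫ ω, X ω ∂P with hc
    have hc0 : 0 ≤ c := sub_nonneg.2 (hle k hk1 hkn)
    refine ⟨fun t ω => (P[X|𝓕 t]) ω + c, ⟨?_, ?_, ?_⟩, ?_, ?_⟩
    · intro t _ _
      exact stronglyMeasurable_condExp.add stronglyMeasurable_const
    · intro t _ _
      exact integrable_condExp.add (integrable_const c)
    · intro t _ htk
      have h1 : P[(fun ω => (P[X|𝓕 (t + 1)]) ω + c)|𝓕 t]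
          =ᵐ[P] P[P[X|𝓕 (t + 1)]|𝓕 t] + P[(fun _ => c)|𝓕 t] :=
        condExp_add integrable_condExp (integrable_const c) _
      have h2 : P[P[X|𝓕 (t + 1)]|𝓕 t] =ᵐ[P] P[X|𝓕 t] :=
        condExp_condExp_of_le (𝓕.mono (Nat.le_succ t)) (𝓕.le (t + 1))
      refine EventuallyEq.le (h1.trans ?_)
      rw [condExp_const (𝓕.le t) c]
      filter_upwards [h2] with ω hω
      simp [hω]
    · have h0 := ae_eq_integral_of_trivial (m0 := m0) (m := 𝓕 0) (𝓕.le 0) P htriv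
        (stronglyMeasurable_condExp (f := X) (m := 𝓕 0) (μ := P)) integrable_condExp
      have hint0 : ∫ ω, (P[X|𝓕 0]) ω ∂P = ∫ ω, X ω ∂P := integral_condExp (𝓕.le 0)
      filter_upwards [h0] with ω hω
      rw [hω, hint0]
      simp [hc]
    · have heq : P[X|𝓕 k] = X := condExp_of_stronglyMeasurable (𝓕.le k) hXm hXint
      refine Eventually.of_forall fun ω => ?_
      show X ω ≤ (P[X|𝓕 k]) ω + c
      rw [heq]
      linarith
  · rintro ⟨M, hM, hint, hN, hx⟩
    refine ⟨M, hM, hint, ?_, hx⟩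
    intro k hk1 hkn
    obtain ⟨N, hNsup, hN0, hNk⟩ := hN k hk1 hkn
    have hdecr : ∀ t, t ≤ k → ∫ ω, N t ω ∂P ≤ ∫ ω, N 0 ω ∂P := by
      intro t
      induction t with
      | zero => intro _; exact le_refl _
      | succ t ih =>
        intro h
        have ht : t < k := Nat.lt_of_succ_le h
        calc ∫ ω, N (t + 1) ω ∂P
            = ∫ ω, (P[N (t + 1)|𝓕 t]) ω ∂P := (integral_condExp (𝓕.le t)).symm
          _ ≤ ∫ ω, N t ω ∂P := integral_mono_ae integrable_condExp
              (hNsup.2.1 t (Nat.zero_le _) ht.le) (hNsup.2.2 t (Nat.zero_le _) ht)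
          _ ≤ ∫ ω, N 0 ω ∂P := ih ht.le
    have h1 : ∫ ω, l (M k ω - S k ω) ∂P ≤ ∫ ω, N k ω ∂P :=
      integral_mono_ae (hint k hk1 hkn) (hNsup.2.1 k (Nat.zero_le _) le_rfl) hNk
    have h2 : ∫ ω, N 0 ω ∂P = α k := by
      rw [integral_congr_ae hN0]
      simp
    linarith [hdecr k le_rfl]
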